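/- (Family 1) Let p, q, r ∈ ℂ with |p| = |q| = |r| = 1, let R = diag(1, p, q, r) (a 4×4 diagonal matrix), let Q = [[a,b],[c,d]] be an invertible 2×2 complex matrix with a·conj(b) + c·conj(d) = 0, let A = Q ⊗ₖ Q, and let k ∈ ℂ with |k| = 1. Then the matrix k·A·R·A⁻¹·T is unitary and satisfies the braided Yang–Baxter equation. -/

import Mathlib

open Matrix Kronecker

/-- Identify `Fin 2 × Fin 2` with `Fin 4` using the basis ordering
`v₀⊗v₀, v₀⊗v₁, v₁⊗v₀, v₁⊗v₁`. -/
def toFin4 : Fin 2 × Fin 2 → Fin 4 := fun p => ⟨2 * p.1.val + p.2.val, by omega⟩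

/-- View an explicit `4 × 4` matrix as a matrix acting on `ℂ² ⊗ ℂ²`. -/
def m44 (M : Matrix (Fin 4) (Fin 4) ℂ) : Matrix (Fin 2 × Fin 2) (Fin 2 × Fin 2) ℂ :=
  M.submatrix toFin4 toFin4

/-- The swap matrix `T`, with `T (vᵢ ⊗ vⱼ) = vⱼ ⊗ vᵢ`. -/
def swapT : Matrix (Fin 2 × Fin 2) (Fin 2 × Fin 2) ℂ :=
  m44 !![1, 0, 0, 0; 0, 0, 1, 0; 0, 1, 0, 0; 0, 0, 0, 1]

/-- The braided Yang–Baxter equation for a matrix acting on `ℂ² ⊗ ℂ²`. -/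
def braidedYB (R : Matrix (Fin 2 × Fin 2) (Fin 2 × Fin 2) ℂ) : Prop :=
  let R12 := Matrix.reindex (Equiv.prodAssoc (Fin 2) (Fin 2) (Fin 2))
      (Equiv.prodAssoc (Fin 2) (Fin 2) (Fin 2)) (R ⊗ₖ (1 : Matrix (Fin 2) (Fin 2) ℂ))
  let R23 := (1 : Matrix (Fin 2) (Fin 2) ℂ) ⊗ₖ R
  R12 * R23 * R12 = R23 * R12 * R23

set_option maxHeartbeats 4000000 in
lemma aux_ybN (p q r : ℂ) : braidedYB (m44 !![1,0,0,0;0,0,p,0;0,q,0,0;0,0,0,r]) := by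
  show _ = _
  ext ⟨i,j,l⟩ ⟨i',j',l'⟩
  fin_cases i <;> fin_cases j <;> fin_cases l <;> fin_cases i' <;> fin_cases j' <;> fin_cases l' <;>
    simp [m44, toFin4, Matrix.mul_apply, Fintype.sum_prod_type, Fin.sum_univ_two,
      Matrix.vecHead, Matrix.vecTail, kroneckerMap_apply, Matrix.one_apply] <;> ring

lemma aux_RT (p q r : ℂ) :
    m44 !![1,0,0,0;0,p,0,0;0,0,q,0;0,0,0,r] * swapT
      = m44 !![1,0,0,0;0,0,p,0;0,q,0,0;0,0,0,r] := by
  ext ⟨i,j⟩ ⟨k,l⟩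
  fin_cases i <;> fin_cases j <;> fin_cases k <;> fin_cases l <;>
    simp [m44, toFin4, swapT, Matrix.mul_apply, Fintype.sum_prod_type, Fin.sum_univ_two,
      Matrix.vecHead, Matrix.vecTail]

lemma aux_swap_kron (X Y : Matrix (Fin 2) (Fin 2) ℂ) :
    swapT * (X ⊗ₖ Y) = (Y ⊗ₖ X) * swapT := by
  ext ⟨i,j⟩ ⟨k,l⟩
  fin_cases i <;> fin_cases j <;> fin_cases k <;> fin_cases l <;>
    simp [swapT, m44, toFin4, Matrix.mul_apply, Fintype.sum_prod_type, Fin.sum_univ_two,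
      Matrix.vecHead, Matrix.vecTail, kroneckerMap_apply] <;> ring

lemma aux_swap_conjTranspose : swapTᴴ = swapT := by
  ext ⟨i,j⟩ ⟨k,l⟩
  fin_cases i <;> fin_cases j <;> fin_cases k <;> fin_cases l <;>
    simp [swapT, m44, toFin4, Matrix.conjTranspose_apply, Matrix.vecHead, Matrix.vecTail]

lemma aux_swap_sq : swapT * swapT = 1 := by
  ext ⟨i,j⟩ ⟨k,l⟩
  fin_cases i <;> fin_cases j <;> fin_cases k <;> fin_cases l <;>
    simp [swapT, m44, toFin4, Matrix.mul_apply, Fintype.sum_prod_type, Fin.sum_univ_two,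
      Matrix.vecHead, Matrix.vecTail, Matrix.one_apply, Prod.ext_iff]

lemma aux_R_conjTranspose (p q r : ℂ) :
    (m44 !![1,0,0,0;0,p,0,0;0,0,q,0;0,0,0,r])ᴴ
      = m44 !![1,0,0,0;0,(starRingEnd ℂ) p,0,0;0,0,(starRingEnd ℂ) q,0;0,0,0,(starRingEnd ℂ) r] := by
  ext ⟨i,j⟩ ⟨k,l⟩
  fin_cases i <;> fin_cases j <;> fin_cases k <;> fin_cases l <;>
    simp [m44, toFin4, Matrix.conjTranspose_apply, Matrix.vecHead, Matrix.vecTail]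

lemma aux_R_mul (u v w u' v' w' : ℂ) :
    m44 !![1,0,0,0;0,u,0,0;0,0,v,0;0,0,0,w] * m44 !![1,0,0,0;0,u',0,0;0,0,v',0;0,0,0,w']
      = m44 !![1,0,0,0;0,u*u',0,0;0,0,v*v',0;0,0,0,w*w'] := by
  ext ⟨i,j⟩ ⟨k,l⟩
  fin_cases i <;> fin_cases j <;> fin_cases k <;> fin_cases l <;>
    simp [m44, toFin4, Matrix.mul_apply, Fintype.sum_prod_type, Fin.sum_univ_two,
      Matrix.vecHead, Matrix.vecTail]

lemma aux_R_one : m44 !![1,0,0,0;0,1,0,0;0,0,1,0;0,0,0,(1:ℂ)] = 1 := by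
  ext ⟨i,j⟩ ⟨k,l⟩
  fin_cases i <;> fin_cases j <;> fin_cases k <;> fin_cases l <;>
    simp [m44, toFin4, Matrix.vecHead, Matrix.vecTail, Matrix.one_apply, Prod.ext_iff]

lemma aux_R_comm (p q r x y : ℂ) :
    m44 !![1,0,0,0;0,p,0,0;0,0,q,0;0,0,0,r] * (!![x,0;0,y] ⊗ₖ !![x,0;0,y])
      = (!![x,0;0,y] ⊗ₖ !![x,0;0,y]) * m44 !![1,0,0,0;0,p,0,0;0,0,q,0;0,0,0,r] := by
  ext ⟨i,j⟩ ⟨k,l⟩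
  fin_cases i <;> fin_cases j <;> fin_cases k <;> fin_cases l <;>
    simp [m44, toFin4, Matrix.mul_apply, Fintype.sum_prod_type, Fin.sum_univ_two,
      Matrix.vecHead, Matrix.vecTail, kroneckerMap_apply] <;> ring

lemma aux_kron_conjTranspose (X Y : Matrix (Fin 2) (Fin 2) ℂ) :
    (X ⊗ₖ Y)ᴴ = Xᴴ ⊗ₖ Yᴴ := by
  ext ⟨i,j⟩ ⟨k,l⟩
  simp [Matrix.conjTranspose_apply, kroneckerMap_apply]

lemma aux_reindex_mul (X Y : Matrix ((Fin 2 × Fin 2) × Fin 2) ((Fin 2 × Fin 2) × Fin 2) ℂ) :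
    Matrix.reindex (Equiv.prodAssoc (Fin 2) (Fin 2) (Fin 2))
        (Equiv.prodAssoc (Fin 2) (Fin 2) (Fin 2)) (X * Y)
      = Matrix.reindex (Equiv.prodAssoc (Fin 2) (Fin 2) (Fin 2))
          (Equiv.prodAssoc (Fin 2) (Fin 2) (Fin 2)) X
        * Matrix.reindex (Equiv.prodAssoc (Fin 2) (Fin 2) (Fin 2))
            (Equiv.prodAssoc (Fin 2) (Fin 2) (Fin 2)) Y := by
  simp [Matrix.reindex_apply, Matrix.submatrix_mul_equiv]

lemma aux_reindex_smul (x : ℂ) (X : Matrix ((Fin 2 × Fin 2) × Fin 2) ((Fin 2 × Fin 2) × Fin 2) ℂ) :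
    Matrix.reindex (Equiv.prodAssoc (Fin 2) (Fin 2) (Fin 2))
        (Equiv.prodAssoc (Fin 2) (Fin 2) (Fin 2)) (x • X)
      = x • Matrix.reindex (Equiv.prodAssoc (Fin 2) (Fin 2) (Fin 2))
          (Equiv.prodAssoc (Fin 2) (Fin 2) (Fin 2)) X := by
  simp [Matrix.reindex_apply, Matrix.submatrix_smul]

set_option maxHeartbeats 4000000 in
/-- Braided YB is stable under conjugation by `S ⊗ S` and scaling. -/
lemma aux_conj_yb (S Si : Matrix (Fin 2) (Fin 2) ℂ) (h1 : S * Si = 1) (h2 : Si * S = 1)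
    (k : ℂ) (N : Matrix (Fin 2 × Fin 2) (Fin 2 × Fin 2) ℂ) (hN : braidedYB N) :
    braidedYB (k • ((S ⊗ₖ S) * N * (Si ⊗ₖ Si))) := by
  set e3 := Equiv.prodAssoc (Fin 2) (Fin 2) (Fin 2) with he3
  set N12 := Matrix.reindex e3 e3 (N ⊗ₖ (1 : Matrix (Fin 2) (Fin 2) ℂ)) with hN12
  set N23 := (1 : Matrix (Fin 2) (Fin 2) ℂ) ⊗ₖ N with hN23
  have hNe : N12 * N23 * N12 = N23 * N12 * N23 := hN
  have hSS : (S ⊗ₖ S) * (Si ⊗ₖ Si) = 1 := by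
    rw [← Matrix.mul_kronecker_mul, h1, Matrix.one_kronecker_one]
  have hSS' : (Si ⊗ₖ Si) * (S ⊗ₖ S) = 1 := by
    rw [← Matrix.mul_kronecker_mul, h2, Matrix.one_kronecker_one]
  set G := S ⊗ₖ (S ⊗ₖ S) with hG
  set G' := Si ⊗ₖ (Si ⊗ₖ Si) with hG'
  have hG'G : G' * G = 1 := by
    rw [hG, hG', ← Matrix.mul_kronecker_mul, h2, hSS', Matrix.one_kronecker_one]
  set M := k • ((S ⊗ₖ S) * N * (Si ⊗ₖ Si)) with hM
  show Matrix.reindex e3 e3 (M ⊗ₖ (1 : Matrix (Fin 2) (Fin 2) ℂ))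
        * ((1 : Matrix (Fin 2) (Fin 2) ℂ) ⊗ₖ M)
        * Matrix.reindex e3 e3 (M ⊗ₖ (1 : Matrix (Fin 2) (Fin 2) ℂ))
      = ((1 : Matrix (Fin 2) (Fin 2) ℂ) ⊗ₖ M)
        * Matrix.reindex e3 e3 (M ⊗ₖ (1 : Matrix (Fin 2) (Fin 2) ℂ))
        * ((1 : Matrix (Fin 2) (Fin 2) ℂ) ⊗ₖ M)
  have hM12 : Matrix.reindex e3 e3 (M ⊗ₖ (1 : Matrix (Fin 2) (Fin 2) ℂ))
      = k • (G * N12 * G') := by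
    rw [hM, Matrix.smul_kronecker, he3, aux_reindex_smul]
    congr 1
    have h3 : ((S ⊗ₖ S) * N * (Si ⊗ₖ Si)) ⊗ₖ ((S * Si) : Matrix (Fin 2) (Fin 2) ℂ)
        = (((S ⊗ₖ S) ⊗ₖ S) * (N ⊗ₖ (1 : Matrix (Fin 2) (Fin 2) ℂ))) * ((Si ⊗ₖ Si) ⊗ₖ Si) := by
      rw [← Matrix.mul_kronecker_mul, ← Matrix.mul_kronecker_mul, Matrix.mul_one]
    rw [← h1, h3, aux_reindex_mul, aux_reindex_mul, hN12, he3,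
      Matrix.kronecker_assoc, Matrix.kronecker_assoc, ← hG, ← hG']
  have hM23 : (1 : Matrix (Fin 2) (Fin 2) ℂ) ⊗ₖ M = k • (G * N23 * G') := by
    rw [hM, Matrix.kronecker_smul]
    congr 1
    have h3 : ((S * Si) : Matrix (Fin 2) (Fin 2) ℂ) ⊗ₖ ((S ⊗ₖ S) * N * (Si ⊗ₖ Si))
        = ((S ⊗ₖ (S ⊗ₖ S)) * ((1 : Matrix (Fin 2) (Fin 2) ℂ) ⊗ₖ N)) * (Si ⊗ₖ (Si ⊗ₖ Si)) := by
      rw [← Matrix.mul_kronecker_mul, ← Matrix.mul_kronecker_mul, Matrix.mul_one]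
    rw [← h1, h3, hN23, ← hG, ← hG']
  rw [hM12, hM23]
  have hcol : ∀ W : Matrix (Fin 2 × (Fin 2 × Fin 2)) (Fin 2 × (Fin 2 × Fin 2)) ℂ,
      G' * (G * W) = W := fun W => by rw [← Matrix.mul_assoc, hG'G, Matrix.one_mul]
  simp only [Matrix.smul_mul, Matrix.mul_smul, smul_smul]
  congr 1
  simp only [Matrix.mul_assoc]
  rw [hcol, hcol, hcol, hcol]
  have h12 : N12 * (N23 * (N12 * G')) = N12 * N23 * N12 * G' := by
    simp only [Matrix.mul_assoc]
  have h23 : N23 * (N12 * (N23 * G')) = N23 * N12 * N23 * G' := by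
    simp only [Matrix.mul_assoc]
  rw [h12, h23, hNe]

theorem family1_unitary_solution (p q r k a b c d : ℂ)
    (hp : ‖p‖ = 1) (hq : ‖q‖ = 1) (hr : ‖r‖ = 1)
    (hk : ‖k‖ = 1)
    (hdet : IsUnit (!![a, b; c, d] : Matrix (Fin 2) (Fin 2) ℂ).det)
    (hc : a * (starRingEnd ℂ) b + c * (starRingEnd ℂ) d = 0) :
    let Q : Matrix (Fin 2) (Fin 2) ℂ := !![a, b; c, d]
    let A := Q ⊗ₖ Q
    let R := m44 !![1, 0, 0, 0; 0, p, 0, 0; 0, 0, q, 0; 0, 0, 0, r]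
    let M := k • (A * R * A⁻¹ * swapT)
    Mᴴ * M = 1 ∧ braidedYB M := by
  intro Q A R M
  have unit_of_abs : ∀ z : ℂ, ‖z‖ = 1 → (starRingEnd ℂ) z * z = 1 := by
    intro z hz
    rw [mul_comm, Complex.mul_conj, Complex.normSq_eq_norm_sq, hz]
    norm_num
  have he : a * d - b * c ≠ 0 := by
    have := hdet.ne_zero
    rwa [Matrix.det_fin_two_of] at this
  set P : Matrix (Fin 2) (Fin 2) ℂ := (a * d - b * c)⁻¹ • !![d, -b; -c, a] with hPdef
  have hQP : Q * P = 1 := by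
    ext i j
    fin_cases i <;> fin_cases j <;>
      simp [hPdef, Q, Matrix.mul_apply, Fin.sum_univ_two, Matrix.one_apply,
        Matrix.vecHead, Matrix.vecTail] <;>
      first | ring1 | linear_combination mul_inv_cancel₀ he
  have hPQ : P * Q = 1 := by
    ext i j
    fin_cases i <;> fin_cases j <;>
      simp [hPdef, Q, Matrix.mul_apply, Fin.sum_univ_two, Matrix.one_apply,
        Matrix.vecHead, Matrix.vecTail] <;>
      field_simp <;> ring
  have hAPk : A * (P ⊗ₖ P) = 1 := by
    show (Q ⊗ₖ Q) * (P ⊗ₖ P) = 1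
    rw [← Matrix.mul_kronecker_mul, hQP, Matrix.one_kronecker_one]
  have hPkA : (P ⊗ₖ P) * A = 1 := by
    show (P ⊗ₖ P) * (Q ⊗ₖ Q) = 1
    rw [← Matrix.mul_kronecker_mul, hPQ, Matrix.one_kronecker_one]
  have hAinv : A⁻¹ = P ⊗ₖ P := Matrix.inv_eq_right_inv hAPk
  have hR : R = m44 !![1,0,0,0;0,p,0,0;0,0,q,0;0,0,0,r] := rfl
  have hM : M = k • (A * R * (P ⊗ₖ P) * swapT) := by
    rw [show M = k • (A * R * A⁻¹ * swapT) from rfl, hAinv]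
  constructor
  · -- unitarity
    have hk1 : (starRingEnd ℂ) k * k = 1 := unit_of_abs k hk
    have hAH : Aᴴ = Qᴴ ⊗ₖ Qᴴ := aux_kron_conjTranspose Q Q
    have hc' : (starRingEnd ℂ) a * b + (starRingEnd ℂ) c * d = 0 := by
      have h := congrArg (starRingEnd ℂ) hc
      simpa using h
    have hD2 : Qᴴ * Q = !![(starRingEnd ℂ) a * a + (starRingEnd ℂ) c * c, 0;
        0, (starRingEnd ℂ) b * b + (starRingEnd ℂ) d * d] := by
      ext i j
      fin_cases i <;> fin_cases j <;>
        simp [Q, Matrix.mul_apply, Fin.sum_univ_two, Matrix.conjTranspose_apply,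
          Matrix.vecHead, Matrix.vecTail] <;>
        first
          | linear_combination hc
          | linear_combination hc'
    have hAHA : Aᴴ * A = (Qᴴ * Q) ⊗ₖ (Qᴴ * Q) := by
      rw [hAH]
      show (Qᴴ ⊗ₖ Qᴴ) * (Q ⊗ₖ Q) = _
      rw [← Matrix.mul_kronecker_mul]
    have hRu : Rᴴ * R = 1 := by
      rw [hR, aux_R_conjTranspose, aux_R_mul]
      rw [unit_of_abs p hp, unit_of_abs q hq, unit_of_abs r hr]
      exact aux_R_one
    have hRHD : Rᴴ * ((Qᴴ * Q) ⊗ₖ (Qᴴ * Q)) = ((Qᴴ * Q) ⊗ₖ (Qᴴ * Q)) * Rᴴ := by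
      rw [hR, aux_R_conjTranspose, hD2]
      exact aux_R_comm _ _ _ _ _
    have step : ∀ W : Matrix (Fin 2 × Fin 2) (Fin 2 × Fin 2) ℂ,
        Rᴴ * (Aᴴ * (A * (R * W))) = Aᴴ * (A * W) := by
      intro W
      rw [← Matrix.mul_assoc Aᴴ A, hAHA, ← Matrix.mul_assoc Rᴴ, hRHD,
        Matrix.mul_assoc, ← Matrix.mul_assoc Rᴴ R, hRu, Matrix.one_mul,
        ← hAHA, Matrix.mul_assoc]
    have hk1s : star k * k = 1 := unit_of_abs k hk
    rw [hM, Matrix.conjTranspose_smul, Matrix.smul_mul, Matrix.mul_smul, smul_smul, hk1s, one_smul]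
    rw [Matrix.conjTranspose_mul, Matrix.conjTranspose_mul, Matrix.conjTranspose_mul,
      aux_swap_conjTranspose]
    simp only [Matrix.mul_assoc]
    rw [step, ← Matrix.mul_assoc A, hAPk, Matrix.one_mul,
      ← Matrix.mul_assoc (P ⊗ₖ P)ᴴ, ← Matrix.conjTranspose_mul, hAPk,
      Matrix.conjTranspose_one, Matrix.one_mul, aux_swap_sq]
  · -- Yang-Baxter
    have hMN : M = k • ((Q ⊗ₖ Q) * m44 !![1,0,0,0;0,0,p,0;0,q,0,0;0,0,0,r] * (P ⊗ₖ P)) := by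
      rw [hM, Matrix.mul_assoc (A * R), ← aux_swap_kron P P, ← Matrix.mul_assoc (A * R),
        Matrix.mul_assoc A, hR, aux_RT]
    rw [hMN]
    exact aux_conj_yb Q P hQP hPQ k _ (aux_ybN p q r)
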